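/- Let m, i ≥ 2 be even, gcd(k, m) = 1, and let α ∈ F_{2^m} be a non-cube. Define f : F_{2^m} × F_{2^m} → F_{2^m} × F_{2^m} by f(x,y) = (x^{2^k+1} + α y^{(2^k+1)2^i}, xy). Then f(x,y) = f(u,v) if and only if (x,y) = (ωu, ω²v) for some ω ∈ F_4*; in particular f is almost-3-to-1. -/
import Mathlib


open Finset
open scoped Classical

/-- Number of preimages of `y` under `f`. -/
noncomputable def preCard {F : Type*} [Fintype F] (f : F → F) (y : F) : ℕ :=
  (Finset.univ.filter fun x => f x = y).card

private lemma two_pow_even_mod3 {n : ℕ} (hn : Even n) : ∃ r, 2 ^ n = 3 * r + 1 := by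
  obtain ⟨j, hj⟩ := hn
  subst hj
  induction j with
  | zero => exact ⟨0, rfl⟩
  | succ j ih =>
    obtain ⟨r, hr⟩ := ih
    refine ⟨4 * r + 1, ?_⟩
    have : 2 ^ (j + 1 + (j + 1)) = 4 * 2 ^ (j + j) := by ring
    rw [this, hr]; ring

private lemma two_pow_odd_mod3 {n : ℕ} (hn : Odd n) : ∃ r, 2 ^ n + 1 = 3 * r := by
  obtain ⟨j, hj⟩ := hn
  subst hj
  obtain ⟨r, hr⟩ := two_pow_even_mod3 (n := 2 * j) ⟨j, by ring⟩
  refine ⟨2 * r + 1, ?_⟩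
  have : 2 ^ (2 * j + 1) = 2 * 2 ^ (2 * j) := by ring
  rw [this, hr]; ring

private lemma frob_pow_inj {K : Type*} [Field K] [CharP K 2] (n : ℕ) {a b : K}
    (h : a ^ 2 ^ n = b ^ 2 ^ n) : a = b := by
  have h0 : (a + b) ^ 2 ^ n = 0 := by
    rw [add_pow_char_pow, h, CharTwo.add_self_eq_zero]
  have hab : a + b = 0 := by
    exact (pow_eq_zero_iff (by positivity)).mp h0
  have := eq_neg_of_add_eq_zero_left hab
  rwa [CharTwo.neg_eq] at this

/-- If `ζ^(2^k+1) = 1` in a field of order `2^m` with `m` even and `gcd(k,m)=1`,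
then `ζ^3 = 1`. -/
private lemma zeta_cube {K : Type*} [Field K] [Fintype K] [CharP K 2]
    {m k : ℕ} (hm : Even m) (hk : Nat.gcd k m = 1) (hcard : Fintype.card K = 2 ^ m)
    {ζ : K} (h : ζ ^ (2 ^ k + 1) = 1) : ζ ^ 3 = 1 := by
  have hζ0 : ζ ≠ 0 := by
    intro h0
    rw [h0, zero_pow (by positivity)] at h
    exact zero_ne_one h
  -- the squaring permutation
  have hinj : Function.Injective (fun x : K => x ^ 2) := by
    intro a b hab
    exact frob_pow_inj 1 (by simpa using hab)
  have hbij : Function.Bijective (fun x : K => x ^ 2) :=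
    Finite.injective_iff_bijective.mp hinj
  set g : Equiv.Perm K := Equiv.ofBijective _ hbij with hg
  have hgapp : ∀ x : K, g x = x ^ 2 := fun x => rfl
  have hgpow : ∀ (n : ℕ) (x : K), (g ^ n) x = x ^ 2 ^ n := by
    intro n
    induction n with
    | zero => intro x; simp
    | succ n ih =>
      intro x
      rw [pow_succ, Equiv.Perm.mul_apply, hgapp, ih, ← pow_mul]
      congr 1
      rw [pow_succ]; ring
  -- ζ is fixed by g^(2k) and g^m
  have hζinv : ζ ^ 2 ^ k = ζ⁻¹ := by
    apply eq_inv_of_mul_eq_one_left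
    rw [← pow_succ]
    exact h
  have hstab2k : g ^ (2 * k) ∈ MulAction.stabilizer (Equiv.Perm K) ζ := by
    rw [MulAction.mem_stabilizer_iff, Equiv.Perm.smul_def, hgpow]
    have h2 : (2 : ℕ) ^ (2 * k) = 2 ^ k * 2 ^ k := by rw [two_mul, pow_add]
    rw [h2, pow_mul, hζinv, inv_pow, hζinv, inv_inv]
  have hstabm : g ^ m ∈ MulAction.stabilizer (Equiv.Perm K) ζ := by
    rw [MulAction.mem_stabilizer_iff, Equiv.Perm.smul_def, hgpow, ← hcard,
      FiniteField.pow_card]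
  -- gcd(2k, m) = 2
  have hgcd : Nat.gcd (2 * k) m = 2 := by
    rw [mul_comm, Nat.Coprime.gcd_mul_left_cancel 2 hk]
    exact Nat.gcd_eq_left hm.two_dvd
  -- Bezout
  have hb : (2 : ℤ) = (2 * k : ℕ) * Int.gcdA (2 * k : ℕ) (m : ℕ)
      + (m : ℕ) * Int.gcdB (2 * k : ℕ) (m : ℕ) := by
    have := Int.gcd_eq_gcd_ab ((2 * k : ℕ) : ℤ) ((m : ℕ) : ℤ)
    rwa [Int.gcd_natCast_natCast, hgcd] at this
  have h2mem : g ^ (2 : ℤ) ∈ MulAction.stabilizer (Equiv.Perm K) ζ := by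
    rw [hb, zpow_add, zpow_mul, zpow_mul]
    exact mul_mem (Subgroup.zpow_mem _ (by rw [zpow_natCast]; exact hstab2k) _)
      (Subgroup.zpow_mem _ (by rw [zpow_natCast]; exact hstabm) _)
  have h4 : ζ ^ 4 = ζ := by
    have h' := MulAction.mem_stabilizer_iff.mp h2mem
    rw [show (2 : ℤ) = ((2 : ℕ) : ℤ) from rfl, zpow_natCast, Equiv.Perm.smul_def,
      hgpow] at h'
    simpa using h'
  have : ζ ^ 3 * ζ = 1 * ζ := by
    rw [one_mul, ← pow_succ]
    exact h4
  exact mul_right_cancel₀ hζ0 this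

private lemma omega_of {K : Type*} [Field K] [Fintype K] [CharP K 2]
    {m k : ℕ} (hm : Even m) (hk : Nat.gcd k m = 1) (hcard : Fintype.card K = 2 ^ m)
    {a b : K} (hb : b ≠ 0) (h : a ^ (2 ^ k + 1) = b ^ (2 ^ k + 1)) :
    ∃ ω : K, ω ^ 3 = 1 ∧ a = ω * b := by
  refine ⟨a * b⁻¹, ?_, by field_simp⟩
  apply zeta_cube hm hk hcard (k := k)
  rw [mul_pow, h, inv_pow, mul_inv_cancel₀ (pow_ne_zero _ hb)]

private lemma alpha_cube {K : Type*} [Field K] {α c d : K} (hc : c ≠ 0)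
    (h : α * c = d) (γ δ : K) (hγ : γ ^ 3 = c) (hδ : δ ^ 3 = d) : ∃ β : K, β ^ 3 = α :=
  ⟨δ * γ⁻¹, by rw [mul_pow, inv_pow, hγ, hδ, ← h, mul_inv_cancel_right₀ hc]⟩

/-- Zhou–Pott maps: for even `m, i ≥ 2`, `gcd(k,m)=1` and a non-cube `α`,
the map `f(x,y) = (x^{2^k+1} + α y^{(2^k+1)2^i}, xy)` satisfies `f(x,y)=f(u,v)` iff
`(x,y)=(ωu, ω²v)` for some cube root of unity `ω ≠ 0` (i.e. `ω ∈ F₄*`); in particular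
`f` is almost-3-to-1. -/
theorem zhou_pott_almost_three_to_one {K : Type*} [Field K] [Fintype K] [CharP K 2]
    {m i k : ℕ} (hm : Even m) (hm2 : 2 ≤ m) (hi : Even i) (hi2 : 2 ≤ i)
    (hk : Nat.gcd k m = 1) (hcard : Fintype.card K = 2 ^ m)
    {α : K} (hα : ¬∃ β : K, β ^ 3 = α)
    (f : K × K → K × K)
    (hfdef : ∀ p : K × K, f p = (p.1 ^ (2 ^ k + 1) + α * p.2 ^ ((2 ^ k + 1) * 2 ^ i), p.1 * p.2)) :
    (∀ x y u v : K, f (x, y) = f (u, v) ↔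
      ∃ ω : K, ω ^ 3 = 1 ∧ x = ω * u ∧ y = ω ^ 2 * v) ∧
    (∃ z₀ ∈ Finset.image f Finset.univ, preCard f z₀ = 1 ∧
      ∀ z ∈ Finset.image f Finset.univ, z ≠ z₀ → preCard f z = 3) := by
  -- arithmetic facts
  have hkodd : Odd k := by
    rcases Nat.even_or_odd k with he | ho
    · exfalso
      have h2 : 2 ∣ Nat.gcd k m := Nat.dvd_gcd he.two_dvd hm.two_dvd
      rw [hk] at h2
      norm_num at h2
    · exact ho
  obtain ⟨t, ht⟩ := two_pow_odd_mod3 hkodd   -- 2^k + 1 = 3 * t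
  obtain ⟨s, hs⟩ := two_pow_even_mod3 hi     -- 2^i = 3 * s + 1
  have hωpow3 : ∀ (ω : K), ω ^ 3 = 1 → ∀ n : ℕ, ω ^ (3 * n) = 1 := by
    intro ω hω3 n
    rw [pow_mul, hω3, one_pow]
  -- the key equivalence
  have key : ∀ x y u v : K, f (x, y) = f (u, v) ↔
      ∃ ω : K, ω ^ 3 = 1 ∧ x = ω * u ∧ y = ω ^ 2 * v := by
    intro x y u v
    constructor
    · intro hf
      rw [hfdef, hfdef] at hf
      simp only [Prod.mk.injEq] at hf
      obtain ⟨e1, e2⟩ := hf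
      rw [pow_mul y, pow_mul v] at e1
      have hNne : (2 : ℕ) ^ k + 1 ≠ 0 := by positivity
      have hQne : (2 : ℕ) ^ i ≠ 0 := by positivity
      by_cases hy0 : y = 0
      · by_cases hv0 : v = 0
        · subst hy0; subst hv0
          simp only [zero_pow hNne, zero_pow hQne, mul_zero, add_zero, zero_add] at e1
          by_cases hu0 : u = 0
          · subst hu0
            simp only [zero_pow hNne] at e1
            have hx0 : x = 0 := by
              exact pow_eq_zero_iff hNne |>.mp e1
            exact ⟨1, one_pow 3, by rw [hx0, mul_zero], by rw [mul_zero]⟩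
          · obtain ⟨ω, hω3, hx⟩ := omega_of hm hk hcard hu0 e1
            exact ⟨ω, hω3, hx, by rw [mul_zero]⟩
        · -- y = 0, v ≠ 0 : contradiction, α would be a cube
          exfalso; apply hα
          subst hy0
          have hu0 : u = 0 := by
            rw [mul_zero] at e2
            rcases mul_eq_zero.mp e2.symm with h' | h'
            · exact h'
            · exact absurd h' hv0
          subst hu0
          simp only [zero_pow hNne, zero_pow hQne, mul_zero, add_zero, zero_add] at e1
          -- e1 : x^(2^k+1) = α * (v^(2^k+1))^(2^i)
          refine alpha_cube (c := (v ^ (2 ^ k + 1)) ^ 2 ^ i) (d := x ^ (2 ^ k + 1))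
            (pow_ne_zero _ (pow_ne_zero _ hv0)) e1.symm ((v ^ t) ^ 2 ^ i) (x ^ t) ?_ ?_
          · rw [← pow_mul, ← pow_mul, ← pow_mul, ht]; congr 1; ring
          · rw [← pow_mul, ht, mul_comm]
      · by_cases hv0 : v = 0
        · -- y ≠ 0, v = 0 : contradiction
          exfalso; apply hα
          subst hv0
          have hx0 : x = 0 := by
            rw [mul_zero] at e2
            rcases mul_eq_zero.mp e2 with h' | h'
            · exact h'
            · exact absurd h' hy0
          subst hx0
          simp only [zero_pow hNne, zero_pow hQne, mul_zero, add_zero, zero_add] at e1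
          -- e1 : α * (y^(2^k+1))^(2^i) = u^(2^k+1)
          refine alpha_cube (c := (y ^ (2 ^ k + 1)) ^ 2 ^ i) (d := u ^ (2 ^ k + 1))
            (pow_ne_zero _ (pow_ne_zero _ hy0)) e1 ((y ^ t) ^ 2 ^ i) (u ^ t) ?_ ?_
          · rw [← pow_mul, ← pow_mul, ← pow_mul, ht]; congr 1; ring
          · rw [← pow_mul, ht, mul_comm]
        · -- y ≠ 0, v ≠ 0
          by_cases hx0 : x = 0
          · -- then u = 0
            subst hx0
            have hu0 : u = 0 := by
              rw [zero_mul] at e2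
              rcases mul_eq_zero.mp e2.symm with h' | h'
              · exact h'
              · exact absurd h' hv0
            subst hu0
            simp only [zero_pow hNne, zero_pow hQne, mul_zero, add_zero, zero_add] at e1
            have hα0 : α ≠ 0 := by
              intro h0
              exact hα ⟨0, by rw [h0, zero_pow (by norm_num)]⟩
            have hBB : y ^ (2 ^ k + 1) = v ^ (2 ^ k + 1) :=
              frob_pow_inj i (mul_left_cancel₀ hα0 e1)
            obtain ⟨θ, hθ3, hyv⟩ := omega_of hm hk hcard hv0 hBB
            refine ⟨θ ^ 2, ?_, by rw [mul_zero], ?_⟩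
            · have h6 : (θ ^ 2) ^ 3 = (θ ^ 3) ^ 2 := by ring
              rw [h6, hθ3, one_pow]
            · have h4 : (θ ^ 2) ^ 2 = θ ^ 3 * θ := by ring
              rw [h4, hθ3, one_mul]
              exact hyv
          · have hu0 : u ≠ 0 := by
              intro h0
              rw [h0, zero_mul] at e2
              rcases mul_eq_zero.mp e2 with h' | h'
              · exact hx0 h'
              · exact hy0 h'
            have e2N : x ^ (2 ^ k + 1) * y ^ (2 ^ k + 1)
                = u ^ (2 ^ k + 1) * v ^ (2 ^ k + 1) := by
              rw [← mul_pow, ← mul_pow, e2]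
            by_cases hBB : y ^ (2 ^ k + 1) = v ^ (2 ^ k + 1)
            · have hAA : x ^ (2 ^ k + 1) = u ^ (2 ^ k + 1) := by
                rw [hBB] at e1
                exact add_right_cancel e1
              obtain ⟨ω, hω3, hxu⟩ := omega_of hm hk hcard hu0 hAA
              obtain ⟨θ, hθ3, hyv⟩ := omega_of hm hk hcard hv0 hBB
              have hω0 : ω ≠ 0 := by
                intro h0
                rw [h0, zero_pow (by norm_num)] at hω3
                exact zero_ne_one hω3
              have hωθ : ω * θ = 1 := by
                have h' : (ω * θ) * (u * v) = 1 * (u * v) := by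
                  rw [hxu, hyv] at e2
                  rw [one_mul]
                  linear_combination e2
                exact mul_right_cancel₀ (mul_ne_zero hu0 hv0) h'
              have hθω : θ = ω ^ 2 := by
                have h' : ω * θ = ω * ω ^ 2 := by
                  rw [hωθ, show ω * ω ^ 2 = ω ^ 3 from by ring, hω3]
                exact mul_left_cancel₀ hω0 h'
              exact ⟨ω, hω3, hxu, by rw [hyv, hθω]⟩
            · -- contradiction : α is a cube
              exfalso; apply hα
              have h2 : (2 : K) = 0 := CharTwo.two_eq_zero
              have hA' : u ^ (2 ^ k + 1) = x ^ (2 ^ k + 1)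
                  + α * (y ^ (2 ^ k + 1)) ^ 2 ^ i + α * (v ^ (2 ^ k + 1)) ^ 2 ^ i := by
                linear_combination -e1 - α * (v ^ (2 ^ k + 1)) ^ 2 ^ i * h2
              rw [hA'] at e2N
              have G : x ^ (2 ^ k + 1) * (y ^ (2 ^ k + 1) + v ^ (2 ^ k + 1))
                  = α * v ^ (2 ^ k + 1)
                    * ((y ^ (2 ^ k + 1)) ^ 2 ^ i + (v ^ (2 ^ k + 1)) ^ 2 ^ i) := by
                linear_combination e2N + x ^ (2 ^ k + 1) * v ^ (2 ^ k + 1) * h2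
              set D : K := y ^ (2 ^ k + 1) + v ^ (2 ^ k + 1) with hD
              have hDfrob : D ^ 2 ^ i
                  = (y ^ (2 ^ k + 1)) ^ 2 ^ i + (v ^ (2 ^ k + 1)) ^ 2 ^ i :=
                add_pow_char_pow _ _ 2 i
              have hD0 : D ≠ 0 := by
                intro h0
                apply hBB
                have := eq_neg_of_add_eq_zero_left h0
                rwa [CharTwo.neg_eq] at this
              have G' : x ^ (2 ^ k + 1) * D = α * v ^ (2 ^ k + 1) * D ^ 2 ^ i := by
                rw [hDfrob]; exact G
              have hQsub : 2 ^ i - 1 + 1 = 2 ^ i := by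
                have : 1 ≤ 2 ^ i := Nat.one_le_two_pow
                omega
              have hpowD : D ^ 2 ^ i = D ^ (2 ^ i - 1) * D := by
                conv_lhs => rw [← hQsub, pow_succ]
              have hstep : x ^ (2 ^ k + 1) * D
                  = (α * (v ^ (2 ^ k + 1) * D ^ (2 ^ i - 1))) * D := by
                rw [G', hpowD]; ring
              have hfin : α * (v ^ (2 ^ k + 1) * D ^ (2 ^ i - 1)) = x ^ (2 ^ k + 1) :=
                (mul_right_cancel₀ hD0 hstep).symm
              have hs' : 2 ^ i - 1 = 3 * s := by omega
              refine alpha_cube (c := v ^ (2 ^ k + 1) * D ^ (2 ^ i - 1))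
                (d := x ^ (2 ^ k + 1))
                (mul_ne_zero (pow_ne_zero _ hv0) (pow_ne_zero _ hD0)) hfin
                (v ^ t * D ^ s) (x ^ t) ?_ ?_
              · rw [mul_pow, ← pow_mul, ← pow_mul, ht, hs']
                congr 1 <;> ring
              · rw [← pow_mul, ht, mul_comm]
    · rintro ⟨ω, hω3, rfl, rfl⟩
      rw [hfdef, hfdef]
      simp only [Prod.mk.injEq]
      constructor
      · have e1 : (ω * u) ^ (2 ^ k + 1) = u ^ (2 ^ k + 1) := by
          rw [mul_pow, ht, hωpow3 ω hω3, one_mul]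
        have e2 : (ω ^ 2 * v) ^ ((2 ^ k + 1) * 2 ^ i) = v ^ ((2 ^ k + 1) * 2 ^ i) := by
          rw [mul_pow, ← pow_mul,
            show 2 * ((2 ^ k + 1) * 2 ^ i) = 3 * (2 * t * 2 ^ i) from by rw [ht]; ring,
            hωpow3 ω hω3, one_mul]
        rw [e1, e2]
      · show ω * u * (ω ^ 2 * v) = u * v
        linear_combination u * v * hω3
  refine ⟨key, ?_⟩
  -- counting part
  set CR : Finset K := Finset.univ.filter (fun ω : K => ω ^ 3 = 1) with hCRdef
  -- there are exactly 3 cube roots of unity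
  obtain ⟨r, hr⟩ := two_pow_even_mod3 hm
  have hdvd : 3 ∣ Fintype.card Kˣ := by
    rw [Fintype.card_units, hcard]
    exact ⟨r, by omega⟩
  haveI : Fact (Nat.Prime 3) := ⟨by norm_num⟩
  obtain ⟨g0, hg0⟩ := exists_prime_orderOf_dvd_card 3 hdvd
  set ω₀ : K := (g0 : K) with hω₀def
  have hω₀3 : ω₀ ^ 3 = 1 := by
    have h' := pow_orderOf_eq_one g0
    rw [hg0] at h'
    have := congrArg (Units.val) h'
    simpa using this
  have hω₀0 : ω₀ ≠ 0 := g0.ne_zero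
  have hω₀ne1 : ω₀ ≠ 1 := by
    intro h1
    have hg1 : g0 = 1 := Units.ext h1
    rw [hg1] at hg0
    simp at hg0
  have hsq_ne1 : ω₀ ^ 2 ≠ 1 := by
    intro h2
    apply hω₀ne1
    have h' : ω₀ ^ 3 = ω₀ ^ 2 * ω₀ := by ring
    rw [hω₀3, h2, one_mul] at h'
    exact h'.symm
  have hsq_ne : ω₀ ^ 2 ≠ ω₀ := by
    intro h2
    apply hω₀ne1
    have h' : ω₀ * ω₀ = ω₀ * 1 := by
      rw [mul_one, show ω₀ * ω₀ = ω₀ ^ 2 from by ring, h2]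
    exact mul_left_cancel₀ hω₀0 h'
  have hCRle : CR.card ≤ 3 := by
    have hsub : CR ⊆ (Polynomial.nthRoots 3 (1 : K)).toFinset := by
      intro ω hω
      rw [Multiset.mem_toFinset, Polynomial.mem_nthRoots (by norm_num)]
      exact (Finset.mem_filter.mp hω).2
    calc CR.card ≤ (Polynomial.nthRoots 3 (1 : K)).toFinset.card :=
          Finset.card_le_card hsub
      _ ≤ Multiset.card (Polynomial.nthRoots 3 (1 : K)) := Multiset.toFinset_card_le _
      _ ≤ 3 := Polynomial.card_nthRoots 3 1
  have hCR3 : CR.card = 3 := by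
    have hsub : ({1, ω₀, ω₀ ^ 2} : Finset K) ⊆ CR := by
      intro z hz
      rw [Finset.mem_insert, Finset.mem_insert, Finset.mem_singleton] at hz
      rw [hCRdef, Finset.mem_filter]
      refine ⟨Finset.mem_univ _, ?_⟩
      rcases hz with rfl | rfl | rfl
      · rw [one_pow]
      · exact hω₀3
      · rw [show (ω₀ ^ 2) ^ 3 = (ω₀ ^ 3) ^ 2 from by ring, hω₀3, one_pow]
    have hc3 : ({1, ω₀, ω₀ ^ 2} : Finset K).card = 3 := by
      rw [Finset.card_insert_of_notMem, Finset.card_insert_of_notMem,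
        Finset.card_singleton]
      · rw [Finset.mem_singleton]
        exact fun h' => hsq_ne h'.symm
      · rw [Finset.mem_insert, Finset.mem_singleton]
        push_neg
        exact ⟨fun h' => hω₀ne1 h'.symm, fun h' => hsq_ne1 h'.symm⟩
    have := Finset.card_le_card hsub
    omega
  refine ⟨f (0, 0), Finset.mem_image.mpr ⟨(0, 0), Finset.mem_univ _, rfl⟩, ?_, ?_⟩
  · -- the preimage of f(0,0) is {(0,0)}
    have hset : (Finset.univ.filter fun p : K × K => f p = f (0, 0))
        = {((0 : K), (0 : K))} := by
      ext p
      rw [Finset.mem_filter, Finset.mem_singleton]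
      constructor
      · rintro ⟨-, hp⟩
        rw [show p = (p.1, p.2) from rfl] at hp
        obtain ⟨ω, -, h1, h2⟩ := (key p.1 p.2 0 0).mp hp
        rw [mul_zero] at h1 h2
        exact Prod.ext h1 h2
      · rintro rfl
        exact ⟨Finset.mem_univ _, rfl⟩
    unfold preCard
    rw [Finset.filter_congr_decidable, hset, Finset.card_singleton]
  · rintro z hz hzne
    obtain ⟨p, -, rfl⟩ := Finset.mem_image.mp hz
    have hp0 : ¬(p.1 = 0 ∧ p.2 = 0) := by
      rintro ⟨h1, h2⟩
      apply hzne
      have hp : p = ((0 : K), (0 : K)) := Prod.ext h1 h2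
      rw [hp]
    have hset : (Finset.univ.filter fun q : K × K => f q = f p)
        = CR.image (fun ω => (ω * p.1, ω ^ 2 * p.2)) := by
      ext q
      rw [Finset.mem_filter, Finset.mem_image]
      constructor
      · rintro ⟨-, hq⟩
        rw [show q = (q.1, q.2) from rfl, show p = (p.1, p.2) from rfl] at hq
        obtain ⟨ω, hω3, h1, h2⟩ := (key q.1 q.2 p.1 p.2).mp hq
        exact ⟨ω, Finset.mem_filter.mpr ⟨Finset.mem_univ _, hω3⟩,
          by rw [← h1, ← h2]⟩
      · rintro ⟨ω, hω, rfl⟩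
        refine ⟨Finset.mem_univ _, ?_⟩
        rw [show p = (p.1, p.2) from rfl]
        exact (key (ω * p.1) (ω ^ 2 * p.2) p.1 p.2).mpr
          ⟨ω, (Finset.mem_filter.mp hω).2, rfl, rfl⟩
    have hinj : Set.InjOn (fun ω : K => (ω * p.1, ω ^ 2 * p.2)) CR := by
      intro ω₁ h₁ ω₂ h₂ he
      have hω₁3 := (Finset.mem_filter.mp h₁).2
      have hω₂3 := (Finset.mem_filter.mp h₂).2
      simp only [Prod.mk.injEq] at he
      rcases not_and_or.mp hp0 with h1 | h2
      · exact mul_right_cancel₀ h1 he.1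
      · have hsq : ω₁ ^ 2 = ω₂ ^ 2 := mul_right_cancel₀ h2 he.2
        have h4 : ∀ ω : K, ω ^ 3 = 1 → ω ^ 4 = ω := by
          intro ω hω
          rw [show ω ^ 4 = ω ^ 3 * ω from by ring, hω, one_mul]
        calc ω₁ = ω₁ ^ 4 := (h4 ω₁ hω₁3).symm
          _ = (ω₁ ^ 2) ^ 2 := by ring
          _ = (ω₂ ^ 2) ^ 2 := by rw [hsq]
          _ = ω₂ ^ 4 := by ring
          _ = ω₂ := h4 ω₂ hω₂3
    unfold preCard
    rw [Finset.filter_congr_decidable, hset, Finset.card_image_of_injOn hinj, hCR3]
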